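/- Let v⁰, …, vᵐ be points in ℝⁿ with mutual distances all at most D (diameter at most D), and κ their barycenter. Then for every i, ‖κ − vⁱ‖ ≤ (1/(m+1))·√(m²·D²) = (m/(m+1))·D; more precisely ‖κ − vⁱ‖² ≤ (1/(m+1)²)(m²D² − C(m,2)·s²) where s is the minimum edge length. -/

import Mathlib

open Finset

/-- Bounds for the distance from the barycenter to the vertices in terms of the
diameter D and the shortest edge length s. -/
theorem barycenter_vertex_bounds (n m : ℕ) (hm : 0 < m) (D s : ℝ) (hs : 0 ≤ s)
    (v : Fin (m + 1) → EuclideanSpace ℝ (Fin n))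
    (hD : ∀ p q, p ≠ q → ‖v p - v q‖ ≤ D)
    (hsle : ∀ p q, p ≠ q → s ≤ ‖v p - v q‖)
    (κ : EuclideanSpace ℝ (Fin n)) (hκ : κ = ((m : ℝ) + 1)⁻¹ • ∑ j, v j)
    (i : Fin (m + 1)) :
    ‖κ - v i‖ ≤ ((m : ℝ) / ((m : ℝ) + 1)) * D ∧
    ‖κ - v i‖ ^ 2 ≤ ((m : ℝ) + 1)⁻¹ ^ 2 *
      ((m : ℝ) ^ 2 * D ^ 2 - ((m : ℝ) * ((m : ℝ) - 1) / 2) * s ^ 2) := by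
  have hmpos : (0:ℝ) < (m:ℝ) + 1 := by positivity
  -- D nonneg
  have hp01 : (⟨0, by omega⟩ : Fin (m+1)) ≠ ⟨1, by omega⟩ := by
    simp [Fin.ext_iff]
  have hD0 : 0 ≤ D := le_trans (norm_nonneg _) (hD _ _ hp01)
  set w : Fin (m+1) → EuclideanSpace ℝ (Fin n) := fun j => v j - v i with hw
  set E : Finset (Fin (m+1)) := Finset.univ.erase i with hE
  have hcard : E.card = m := by
    simp [hE, Finset.card_erase_of_mem]
  -- κ - v i = (m+1)⁻¹ • ∑ j ∈ E, w j
  have hkey : κ - v i = ((m:ℝ) + 1)⁻¹ • ∑ j ∈ E, w j := by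
    have h1 : ∑ j ∈ E, w j = ∑ j : Fin (m+1), w j :=
      Finset.sum_erase _ (by simp [hw])
    rw [h1, hκ]
    have : ∑ j : Fin (m+1), w j = (∑ j, v j) - ((m:ℝ)+1) • v i := by
      simp only [hw, Finset.sum_sub_distrib, Finset.sum_const, Finset.card_univ,
        Fintype.card_fin]
      congr 1
      rw [show ((m:ℝ)+1) = ((m+1 : ℕ) : ℝ) by push_cast; ring, Nat.cast_smul_eq_nsmul]
    rw [this, smul_sub, smul_smul, inv_mul_cancel₀ (ne_of_gt hmpos), one_smul]
  -- norms
  have hnormsq : ‖κ - v i‖ ^ 2 = ((m:ℝ)+1)⁻¹ ^ 2 * ‖∑ j ∈ E, w j‖ ^ 2 := by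
    rw [hkey, norm_smul, mul_pow]
    congr 1
    rw [Real.norm_eq_abs, abs_of_nonneg (by positivity)]
  -- expand square of sum into inner products
  have hSsq : ‖∑ j ∈ E, w j‖ ^ 2 = ∑ j ∈ E, ∑ k ∈ E, (inner ℝ (w j) (w k) : ℝ) := by
    rw [← real_inner_self_eq_norm_sq, sum_inner]
    exact Finset.sum_congr rfl fun j _ => inner_sum _ _ _
  -- per-term bound
  have hterm : ∀ j ∈ E, ∀ k ∈ E, (inner ℝ (w j) (w k) : ℝ) ≤
      (D^2 - s^2/2) + (if j = k then s^2/2 else 0) := by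
    intro j hj k hk
    have hji : j ≠ i := Finset.ne_of_mem_erase hj
    have hki : k ≠ i := Finset.ne_of_mem_erase hk
    have hwj : ‖w j‖ ≤ D := hD j i hji
    have hwk : ‖w k‖ ≤ D := hD k i hki
    have hwj2 : ‖w j‖^2 ≤ D^2 := pow_le_pow_left₀ (norm_nonneg _) hwj 2
    have hwk2 : ‖w k‖^2 ≤ D^2 := pow_le_pow_left₀ (norm_nonneg _) hwk 2
    by_cases hjk : j = k
    · subst hjk
      rw [if_pos rfl, real_inner_self_eq_norm_sq]
      linarith
    · simp only [if_neg hjk, add_zero]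
      have hsub : w j - w k = v j - v k := by
        simp only [hw]
        abel
      have hpol : ‖w j - w k‖^2 = ‖w j‖^2 - 2 * (inner ℝ (w j) (w k) : ℝ) + ‖w k‖^2 :=
        norm_sub_sq_real (w j) (w k)
      have hs2 : s^2 ≤ ‖w j - w k‖^2 := by
        rw [hsub]
        exact pow_le_pow_left₀ hs (hsle j k hjk) 2
      linarith
  -- sum the bound
  have hsum : ∑ j ∈ E, ∑ k ∈ E, ((D^2 - s^2/2) + (if j = k then s^2/2 else 0))
      = (m:ℝ)^2 * D^2 - ((m:ℝ) * ((m:ℝ) - 1) / 2) * s^2 := by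
    have hinner : ∀ j ∈ E, ∑ k ∈ E, ((D^2 - s^2/2) + (if j = k then s^2/2 else 0))
        = (m:ℝ) * (D^2 - s^2/2) + s^2/2 := by
      intro j hj
      rw [Finset.sum_add_distrib, Finset.sum_const, hcard, Finset.sum_ite_eq E j
        (fun _ => s^2/2), if_pos hj, nsmul_eq_mul]
    rw [Finset.sum_congr rfl hinner, Finset.sum_const, hcard, nsmul_eq_mul]
    ring
  have hbound : ‖∑ j ∈ E, w j‖ ^ 2 ≤ (m:ℝ)^2 * D^2 - ((m:ℝ) * ((m:ℝ) - 1) / 2) * s^2 := by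
    rw [hSsq, ← hsum]
    exact Finset.sum_le_sum fun j hj => Finset.sum_le_sum fun k hk => hterm j hj k hk
  have h2 : ‖κ - v i‖ ^ 2 ≤ ((m : ℝ) + 1)⁻¹ ^ 2 *
      ((m : ℝ) ^ 2 * D ^ 2 - ((m : ℝ) * ((m : ℝ) - 1) / 2) * s ^ 2) := by
    rw [hnormsq]
    exact mul_le_mul_of_nonneg_left hbound (by positivity)
  refine ⟨?_, h2⟩
  have hm1 : (1:ℝ) ≤ (m:ℝ) := by exact_mod_cast hm
  have h3 : ‖κ - v i‖ ^ 2 ≤ (((m:ℝ) / ((m:ℝ) + 1)) * D) ^ 2 := by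
    have hss : 0 ≤ ((m : ℝ) * ((m : ℝ) - 1) / 2) * s^2 := by
      apply mul_nonneg _ (sq_nonneg s)
      have : (0:ℝ) ≤ (m:ℝ) - 1 := by linarith
      positivity
    have : (((m:ℝ) / ((m:ℝ) + 1)) * D) ^ 2 = ((m : ℝ) + 1)⁻¹ ^ 2 * ((m : ℝ) ^ 2 * D ^ 2) := by
      field_simp
    rw [this]
    calc ‖κ - v i‖ ^ 2 ≤ _ := h2
      _ ≤ _ := by
        apply mul_le_mul_of_nonneg_left _ (by positivity)
        linarith
  calc ‖κ - v i‖ = Real.sqrt (‖κ - v i‖ ^ 2) := by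
        rw [Real.sqrt_sq (norm_nonneg _)]
    _ ≤ Real.sqrt ((((m:ℝ) / ((m:ℝ) + 1)) * D) ^ 2) := Real.sqrt_le_sqrt h3
    _ = ((m:ℝ) / ((m:ℝ) + 1)) * D := Real.sqrt_sq (by positivity)
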